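/- For any odd prime p and any integer c coprime to p, the number of pairs (a, b) with 1 ≤ a, b ≤ p-1 such that ((a*b)/p)*((a*b - 4*c)/p) = 1 is at least (p-1)^2/2 - O(p^{3/2}). -/

import Mathlib

open Finset

/-- Complete character sum: `∑ s, χ(s)χ(s-d) = -1` for `d ≠ 0`. -/
lemma aux_sum {p : ℕ} [Fact p.Prime] (hp2 : p ≠ 2) {d : ZMod p} (hd : d ≠ 0) :
    ∑ s : ZMod p, quadraticChar (ZMod p) s * quadraticChar (ZMod p) (s - d) = -1 := by
  set χ := quadraticChar (ZMod p) with hχ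
  have hring : ringChar (ZMod p) ≠ 2 := by
    rw [ZMod.ringChar_zmod_n]; exact hp2
  have key : ∑ s ∈ univ.filter (fun s : ZMod p => s ≠ 0),
      (χ s * χ (s - d)) = ∑ u ∈ univ.filter (fun u : ZMod p => u ≠ 1), χ u := by
    refine Finset.sum_nbij' (fun s => 1 - d * s⁻¹) (fun u => d * (1 - u)⁻¹) ?_ ?_ ?_ ?_ ?_
    · intro s hs
      simp only [mem_filter, mem_univ, true_and] at hs ⊢
      intro h
      have : d * s⁻¹ = 0 := by linear_combination -h
      rcases mul_eq_zero.mp this with h' | h'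
      · exact hd h'
      · exact hs (by simpa using inv_eq_zero.mp h')
    · intro u hu
      simp only [mem_filter, mem_univ, true_and] at hu ⊢
      have h1u : (1 : ZMod p) - u ≠ 0 := sub_ne_zero.mpr (Ne.symm hu)
      exact mul_ne_zero hd (inv_ne_zero h1u)
    · intro s hs
      simp only [mem_filter, mem_univ, true_and] at hs
      field_simp
      rw [sub_sub_cancel, div_self hd]
    · intro u hu
      simp only [mem_filter, mem_univ, true_and] at hu
      have h1u : (1 : ZMod p) - u ≠ 0 := sub_ne_zero.mpr (Ne.symm hu)
      field_simp
      ring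
    · intro s hs
      simp only [mem_filter, mem_univ, true_and] at hs
      have h1 : s - d = s * (1 - d * s⁻¹) := by field_simp
      rw [h1, map_mul, ← mul_assoc, ← pow_two, quadraticChar_sq_one hs, one_mul]
  have h0 : ∑ s : ZMod p, χ s * χ (s - d)
      = ∑ s ∈ univ.filter (fun s : ZMod p => s ≠ 0), (χ s * χ (s - d)) := by
    rw [Finset.sum_filter_of_ne]
    intro s _ h h0
    rw [h0] at h
    simp [hχ] at h
  have h1 : ∑ u ∈ univ.filter (fun u : ZMod p => u ≠ 1), χ u
      = (∑ u : ZMod p, χ u) - χ 1 := by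
    rw [← Finset.sum_filter_add_sum_filter_not univ (fun u : ZMod p => u ≠ 1) χ]
    have : univ.filter (fun u : ZMod p => ¬u ≠ 1) = {1} := by
      ext u; simp [not_not]
    rw [this, Finset.sum_singleton]; ring
  rw [h0, key, h1, quadraticChar_sum_zero hring, map_one]
  ring

/-- Count: at least `(p-3)/2` values of `s` have `χ(s)χ(s-d) = 1`. -/
lemma aux_count {p : ℕ} [Fact p.Prime] (hp2 : p ≠ 2) {d : ZMod p} (hd : d ≠ 0) :
    (p : ℤ) - 3 ≤ 2 * ((univ.filter fun s : ZMod p =>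
      quadraticChar (ZMod p) s * quadraticChar (ZMod p) (s - d) = 1).card : ℤ) := by
  set χ := quadraticChar (ZMod p) with hχ
  set f : ZMod p → ℤ := fun s => χ s * χ (s - d) with hf
  have hval : ∀ s : ZMod p, f s = 1 ∨ f s = -1 ∨ f s = 0 := by
    intro s
    rcases eq_or_ne s 0 with h | h
    · right; right; simp [hf, h, hχ]
    rcases eq_or_ne s d with h' | h'
    · right; right; simp [hf, h', hχ]
    have hs := quadraticChar_dichotomy h
    have hsd := quadraticChar_dichotomy (sub_ne_zero.mpr h')
    rcases hs with h1 | h1 <;> rcases hsd with h2 | h2 <;>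
      (simp only [hf, hχ]; rw [h1, h2]; norm_num)
  have hsum : ∑ s : ZMod p, f s = -1 := aux_sum hp2 hd
  have hZ : (univ.filter fun s : ZMod p => f s = 0).card ≤ 2 := by
    have hsub : (univ.filter fun s : ZMod p => f s = 0) ⊆ {0, d} := by
      intro s hs
      simp only [mem_filter, mem_univ, true_and, hf, mul_eq_zero, hχ,
        quadraticChar_eq_zero_iff, sub_eq_zero] at hs
      simp [Finset.mem_insert, Finset.mem_singleton, hs]
    calc (univ.filter fun s : ZMod p => f s = 0).card ≤ ({0, d} : Finset (ZMod p)).card :=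
          Finset.card_le_card hsub
      _ ≤ 2 := Finset.card_insert_le _ _ |>.trans (by simp)
  have hpt : ∀ s : ZMod p, (1 : ℤ) + f s ≤
      (if f s = 1 then 2 else 0) + (if f s = 0 then 1 else 0) := by
    intro s
    rcases hval s with h | h | h <;> simp [h]
  have hbound : ∑ s : ZMod p, ((1 : ℤ) + f s) ≤
      2 * ((univ.filter fun s : ZMod p => f s = 1).card : ℤ)
      + ((univ.filter fun s : ZMod p => f s = 0).card : ℤ) := by
    calc ∑ s : ZMod p, ((1 : ℤ) + f s)
        ≤ ∑ s : ZMod p, ((if f s = 1 then 2 else 0) + (if f s = 0 then 1 else 0)) :=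
          Finset.sum_le_sum (fun s _ => hpt s)
      _ = (∑ s : ZMod p, (if f s = 1 then (2:ℤ) else 0))
          + ∑ s : ZMod p, (if f s = 0 then (1:ℤ) else 0) := Finset.sum_add_distrib
      _ = 2 * ((univ.filter fun s : ZMod p => f s = 1).card : ℤ)
          + ((univ.filter fun s : ZMod p => f s = 0).card : ℤ) := by
          rw [← Finset.sum_filter, ← Finset.sum_filter, Finset.sum_const, Finset.sum_const]
          ring
  have hcard : ∑ s : ZMod p, ((1 : ℤ) + f s) = (p : ℤ) - 1 := by
    rw [Finset.sum_add_distrib, hsum, Finset.sum_const, Finset.card_univ, ZMod.card]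
    ring
  rw [hcard] at hbound
  have hrw : (univ.filter fun s : ZMod p => χ s * χ (s - d) = 1)
      = (univ.filter fun s : ZMod p => f s = 1) := rfl
  rw [hrw]
  omega

/-- Counting pairs via the product residue. -/
lemma aux_bij {p : ℕ} [Fact p.Prime] (c : ℤ) :
    ((Finset.Icc (1 : ℤ) ((p : ℤ) - 1) ×ˢ Finset.Icc (1 : ℤ) ((p : ℤ) - 1)).filter
        (fun ab => legendreSym p (ab.1 * ab.2) *
          legendreSym p (ab.1 * ab.2 - 4 * c) = 1)).card
    = (p - 1) * (univ.filter fun s : ZMod p =>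
        quadraticChar (ZMod p) s *
          quadraticChar (ZMod p) (s - ((4 * c : ℤ) : ZMod p)) = 1).card := by
  have hp0 : 0 < p := (Fact.out : p.Prime).pos
  set χ := quadraticChar (ZMod p) with hχ
  set d : ZMod p := ((4 * c : ℤ) : ZMod p) with hd
  have hmem : ∀ a : ℤ, a ∈ Finset.Icc (1 : ℤ) ((p : ℤ) - 1) → (a : ZMod p) ≠ 0 := by
    intro a ha h
    rw [Finset.mem_Icc] at ha
    rw [ZMod.intCast_zmod_eq_zero_iff_dvd] at h
    have := Int.le_of_dvd (by omega) h
    omega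
  have hleg : ∀ n : ℤ, legendreSym p n = χ ((n : ZMod p)) := fun _ => rfl
  have hcond : ∀ a b : ℤ,
      (legendreSym p (a * b) * legendreSym p (a * b - 4 * c) = 1) ↔
      (χ ((a : ZMod p) * (b : ZMod p)) *
        χ ((a : ZMod p) * (b : ZMod p) - d) = 1) := by
    intro a b
    rw [hleg, hleg, hd]
    push_cast
    exact Iff.rfl
  rw [show (p - 1) * (univ.filter fun s : ZMod p => χ s * χ (s - d) = 1).card
      = ((Finset.Icc (1 : ℤ) ((p : ℤ) - 1)) ×ˢ
          (univ.filter fun s : ZMod p => χ s * χ (s - d) = 1)).card by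
    rw [Finset.card_product, Int.card_Icc]
    congr 1
    omega]
  refine Finset.card_nbij' (fun ab => (ab.1, ((ab.1 * ab.2 : ℤ) : ZMod p)))
    (fun as => (as.1, ((as.2 * (as.1 : ZMod p)⁻¹).val : ℤ))) ?_ ?_ ?_ ?_
  · intro ab hab
    rw [Finset.mem_coe, Finset.mem_filter, Finset.mem_product] at hab
    obtain ⟨⟨ha, hb⟩, hcnd⟩ := hab
    rw [Finset.mem_coe, Finset.mem_product, Finset.mem_filter]
    refine ⟨ha, Finset.mem_univ _, ?_⟩
    rw [hcond] at hcnd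
    push_cast
    exact hcnd
  · intro as has
    rw [Finset.mem_coe, Finset.mem_product, Finset.mem_filter] at has
    obtain ⟨ha, -, hcnd⟩ := has
    have hA : ((as.1 : ℤ) : ZMod p) ≠ 0 := hmem _ ha
    have hs : as.2 ≠ 0 := by
      intro h
      rw [h] at hcnd
      simp [hχ] at hcnd
    have he : as.2 * ((as.1 : ℤ) : ZMod p)⁻¹ ≠ 0 :=
      mul_ne_zero hs (inv_ne_zero hA)
    have hvalne : (as.2 * ((as.1 : ℤ) : ZMod p)⁻¹).val ≠ 0 := by
      rwa [Ne, ZMod.val_eq_zero]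
    have hvallt : (as.2 * ((as.1 : ℤ) : ZMod p)⁻¹).val < p := ZMod.val_lt _
    have hbcast : (((as.2 * ((as.1 : ℤ) : ZMod p)⁻¹).val : ℤ) : ZMod p)
        = as.2 * ((as.1 : ℤ) : ZMod p)⁻¹ := by
      push_cast
      simp [ZMod.natCast_val, ZMod.cast_id]
    simp only [Finset.mem_coe, Finset.mem_filter, Finset.mem_product]
    refine ⟨⟨ha, ?_⟩, ?_⟩
    · rw [Finset.mem_Icc]
      omega
    · rw [hcond, hbcast]
      rw [mul_comm as.2, ← mul_assoc, mul_inv_cancel₀ hA, one_mul]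
      exact hcnd
  · intro ab hab
    rw [Finset.mem_coe, Finset.mem_filter, Finset.mem_product] at hab
    obtain ⟨⟨ha, hb⟩, -⟩ := hab
    have hA : ((ab.1 : ℤ) : ZMod p) ≠ 0 := hmem _ ha
    rw [Finset.mem_Icc] at hb
    have h1 : ((ab.1 * ab.2 : ℤ) : ZMod p) * ((ab.1 : ℤ) : ZMod p)⁻¹
        = ((ab.2 : ℤ) : ZMod p) := by
      push_cast
      field_simp
    have h2 : (((((ab.2 : ℤ) : ZMod p)).val : ℤ)) = ab.2 := by
      rw [ZMod.val_intCast, Int.emod_eq_of_lt (by omega) (by omega)]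
    ext
    · rfl
    · show ((((ab.1 * ab.2 : ℤ) : ZMod p) * ((ab.1 : ℤ) : ZMod p)⁻¹).val : ℤ) = ab.2
      rw [h1, h2]
  · intro as has
    rw [Finset.mem_coe, Finset.mem_product, Finset.mem_filter] at has
    obtain ⟨ha, -, hcnd⟩ := has
    have hA : ((as.1 : ℤ) : ZMod p) ≠ 0 := hmem _ ha
    have hbcast : (((as.2 * ((as.1 : ℤ) : ZMod p)⁻¹).val : ℤ) : ZMod p)
        = as.2 * ((as.1 : ℤ) : ZMod p)⁻¹ := by
      push_cast
      simp [ZMod.natCast_val, ZMod.cast_id]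
    ext
    · rfl
    · show ((as.1 * _ : ℤ) : ZMod p) = as.2
      rw [Int.cast_mul, hbcast, ← mul_assoc, mul_comm ((as.1 : ℤ) : ZMod p) as.2, mul_assoc,
        mul_inv_cancel₀ hA, mul_one]

theorem stmt_7 : ∃ C : ℝ, 0 < C ∧ ∀ p : ℕ, ∀ hp : p.Prime, Odd p →
    ∀ c : ℤ, IsCoprime c (p : ℤ) →
    haveI : Fact p.Prime := ⟨hp⟩
    ((p : ℝ) - 1) ^ 2 / 2 - C * (p : ℝ) ^ ((3 : ℝ) / 2) ≤
      (((Finset.Icc (1 : ℤ) ((p : ℤ) - 1) ×ˢ Finset.Icc (1 : ℤ) ((p : ℤ) - 1)).filter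
        (fun ab => legendreSym p (ab.1 * ab.2) *
          legendreSym p (ab.1 * ab.2 - 4 * c) = 1)).card : ℝ) := by
  refine ⟨1, one_pos, ?_⟩
  intro p hp hodd c hc
  haveI : Fact p.Prime := ⟨hp⟩
  have hp2 : p ≠ 2 := by
    rintro rfl
    exact (by norm_num : ¬ Odd 2) hodd
  have hp3 : 3 ≤ p := by
    have := hp.two_le
    rcases Nat.lt_or_ge p 3 with h | h
    · interval_cases p
      · exact absurd rfl hp2
    · exact h
  have hc0 : ((c : ℤ) : ZMod p) ≠ 0 := by
    intro h
    rw [ZMod.intCast_zmod_eq_zero_iff_dvd] at h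
    have : IsUnit ((p : ℤ)) := hc.isUnit_of_dvd' h dvd_rfl
    rw [Int.isUnit_iff] at this
    omega
  have h4 : ((4 : ℤ) : ZMod p) ≠ 0 := by
    intro h
    rw [ZMod.intCast_zmod_eq_zero_iff_dvd] at h
    have h' : p ∣ 4 := by exact_mod_cast h
    have h2' : p ∣ 2 := hp.dvd_of_dvd_pow (n := 2) (by norm_num; exact h' : p ∣ 2 ^ 2)
    exact hp2 ((Nat.prime_dvd_prime_iff_eq hp Nat.prime_two).mp h2')
  have hd : ((4 * c : ℤ) : ZMod p) ≠ 0 := by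
    push_cast
    exact mul_ne_zero (by exact_mod_cast h4) hc0
  have hcount := aux_count hp2 hd
  have hbij := aux_bij (p := p) c
  rw [hbij]
  set N := (univ.filter fun s : ZMod p =>
      quadraticChar (ZMod p) s *
        quadraticChar (ZMod p) (s - ((4 * c : ℤ) : ZMod p)) = 1).card with hN
  have hcast : (((p - 1) * N : ℕ) : ℝ) = ((p : ℝ) - 1) * N := by
    push_cast [Nat.cast_sub (by omega : 1 ≤ p)]
    ring
  rw [hcast]
  have hNreal : ((p : ℝ) - 3) / 2 ≤ (N : ℝ) := by
    have : ((p : ℝ) - 3) ≤ 2 * N := by exact_mod_cast hcount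
    linarith
  have hpow : (p : ℝ) ≤ (p : ℝ) ^ ((3 : ℝ) / 2) := by
    have h1p : (1 : ℝ) ≤ (p : ℝ) := by exact_mod_cast hp.one_lt.le
    calc (p : ℝ) = (p : ℝ) ^ (1 : ℝ) := (Real.rpow_one _).symm
      _ ≤ (p : ℝ) ^ ((3 : ℝ) / 2) :=
        Real.rpow_le_rpow_of_exponent_le h1p (by norm_num)
  have hp3r : (3 : ℝ) ≤ (p : ℝ) := by exact_mod_cast hp3
  have hmul : ((p : ℝ) - 1) * (((p : ℝ) - 3) / 2) ≤ ((p : ℝ) - 1) * N :=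
    mul_le_mul_of_nonneg_left hNreal (by linarith)
  nlinarith [hmul, hpow, hp3r]
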